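/- Let A be a symmetric positive definite n×n matrix and let p ∈ ℝⁿ be nonzero. Define g = p - α A p with α = pᵀp/(pᵀAp), L = I + p gᵀ/‖p‖², and A' = Lᵀ A L. Let K(A,p) denote the smallest A-invariant subspace containing p (the Krylov subspace span{p, Ap, A²p, ...}). Then K(A', g) is a proper subspace of K(A, p). -/

import Mathlib

open Matrix

private lemma vecMulVec_mulVec' {n : ℕ} (u v w : Fin n → ℝ) :
    vecMulVec u v *ᵥ w = (v ⬝ᵥ w) • u := by
  funext i
  simp [vecMulVec_apply, mulVec, dotProduct, Finset.mul_sum, mul_comm, mul_left_comm]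

private lemma vecMulVec_transpose' {n : ℕ} (u v : Fin n → ℝ) :
    (vecMulVec u v)ᵀ = vecMulVec v u := by
  ext i j; simp [vecMulVec_apply, mul_comm]

theorem krylov_strictly_decreases (n : ℕ) (A : Matrix (Fin n) (Fin n) ℝ)
    (hA : A.PosDef) (p : Fin n → ℝ) (hp : p ≠ 0)
    (α : ℝ) (hα : α = (p ⬝ᵥ p) / (p ⬝ᵥ (A *ᵥ p)))
    (g : Fin n → ℝ) (hg : g = p - α • (A *ᵥ p))
    (L A' : Matrix (Fin n) (Fin n) ℝ)
    (hL : L = 1 + (p ⬝ᵥ p)⁻¹ • vecMulVec p g)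
    (hA' : A' = Lᵀ * A * L) :
    Submodule.span ℝ {x : Fin n → ℝ | ∃ i : ℕ, x = (A' ^ i) *ᵥ g} <
      Submodule.span ℝ {x : Fin n → ℝ | ∃ i : ℕ, x = (A ^ i) *ᵥ p} := by
  set S := Submodule.span ℝ {x : Fin n → ℝ | ∃ i : ℕ, x = (A ^ i) *ᵥ p} with hS
  -- basic scalar facts
  have hpp : (0:ℝ) < p ⬝ᵥ p := by
    have h0 : (0:ℝ) ≤ p ⬝ᵥ p := Finset.sum_nonneg fun i _ => mul_self_nonneg _
    rcases lt_or_eq_of_le h0 with h | h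
    · exact h
    · exact absurd (dotProduct_self_eq_zero.mp h.symm) hp
  have hpAp : (0:ℝ) < p ⬝ᵥ (A *ᵥ p) := by
    have := hA.dotProduct_mulVec_pos hp; simpa using this
  have hAsymm : Aᵀ = A := by
    have := hA.isHermitian.eq; simpa [Matrix.conjTranspose_eq_transpose_of_trivial] using this
  -- symmetry of A as dot products
  have hdotA : ∀ v : Fin n → ℝ, p ⬝ᵥ (A *ᵥ v) = (A *ᵥ p) ⬝ᵥ v := by
    intro v
    rw [dotProduct_mulVec]
    congr 1
    rw [← vecMul_transpose, hAsymm]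
  -- p ⊥ g
  have hpg : p ⬝ᵥ g = 0 := by
    subst hg
    rw [dotProduct_sub, dotProduct_smul, hα]
    rw [smul_eq_mul, div_mul_cancel₀ _ hpAp.ne', sub_self]
  -- action of L and Lᵀ on vectors
  have hLv : ∀ v : Fin n → ℝ, L *ᵥ v = v + ((p ⬝ᵥ p)⁻¹ * (g ⬝ᵥ v)) • p := by
    intro v
    rw [hL, add_mulVec, one_mulVec, smul_mulVec, vecMulVec_mulVec', smul_smul]
  have hLTv : ∀ v : Fin n → ℝ, Lᵀ *ᵥ v = v + ((p ⬝ᵥ p)⁻¹ * (p ⬝ᵥ v)) • g := by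
    intro v
    rw [hL, transpose_add, transpose_one, transpose_smul, vecMulVec_transpose',
      add_mulVec, one_mulVec, smul_mulVec, vecMulVec_mulVec', smul_smul]
  -- membership facts about S
  have hpS : p ∈ S := by
    apply Submodule.subset_span
    exact ⟨0, by simp⟩
  have hApS : A *ᵥ p ∈ S := by
    apply Submodule.subset_span
    exact ⟨1, by simp⟩
  have hgS : g ∈ S := by
    rw [hg]; exact S.sub_mem hpS (S.smul_mem α hApS)
  have hAinv : ∀ v ∈ S, A *ᵥ v ∈ S := by
    intro v hv
    induction hv using Submodule.span_induction with
    | mem x hx =>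
      obtain ⟨i, rfl⟩ := hx
      apply Submodule.subset_span
      exact ⟨i + 1, by rw [mulVec_mulVec, ← pow_succ']⟩
    | zero => simp [S.zero_mem]
    | add x y _ _ hx hy => rw [mulVec_add]; exact S.add_mem hx hy
    | smul c x _ hx => rw [mulVec_smul]; exact S.smul_mem c hx
  -- the key invariance step
  have key : ∀ v : Fin n → ℝ, v ∈ S → p ⬝ᵥ v = 0 →
      A' *ᵥ v ∈ S ∧ p ⬝ᵥ (A' *ᵥ v) = 0 := by
    intro v hvS hvperp
    have hA'v : A' *ᵥ v = Lᵀ *ᵥ (A *ᵥ (L *ᵥ v)) := by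
      rw [hA', mulVec_mulVec, mulVec_mulVec]
    have hLvS : L *ᵥ v ∈ S := by
      rw [hLv]; exact S.add_mem hvS (S.smul_mem _ hpS)
    have hALvS : A *ᵥ (L *ᵥ v) ∈ S := hAinv _ hLvS
    constructor
    · rw [hA'v, hLTv]
      exact S.add_mem hALvS (S.smul_mem _ hgS)
    · rw [hA'v, hLTv, dotProduct_add, dotProduct_smul, hpg, smul_zero, add_zero,
        hLv, mulVec_add, mulVec_smul, dotProduct_add, dotProduct_smul]
      have h1 : p ⬝ᵥ (A *ᵥ v) = (A *ᵥ p) ⬝ᵥ v := hdotA v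
      have h2 : g ⬝ᵥ v = -α * ((A *ᵥ p) ⬝ᵥ v) := by
        rw [hg, sub_dotProduct, smul_dotProduct, hvperp, smul_eq_mul]
        ring
      rw [h1, h2, hα]
      have : p ⬝ᵥ (A *ᵥ p) ≠ 0 := ne_of_gt hpAp
      field_simp
      ring_nf
      simp [this]
  -- all generators of the small space lie in S ∩ p^⊥
  have gen : ∀ i : ℕ, (A' ^ i) *ᵥ g ∈ S ∧ p ⬝ᵥ ((A' ^ i) *ᵥ g) = 0 := by
    intro i
    induction i with
    | zero => simpa using ⟨hgS, hpg⟩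
    | succ k ih =>
      have : (A' ^ (k + 1)) *ᵥ g = A' *ᵥ ((A' ^ k) *ᵥ g) := by
        rw [mulVec_mulVec, ← pow_succ']
      rw [this]
      exact key _ ih.1 ih.2
  rw [SetLike.lt_iff_le_and_exists]
  constructor
  · rw [Submodule.span_le]
    rintro x ⟨i, rfl⟩
    exact (gen i).1
  · refine ⟨p, hpS, fun hmem => ?_⟩
    -- everything in the small span is orthogonal to p, but p ⬝ᵥ p ≠ 0
    have horth : ∀ x ∈ Submodule.span ℝ {x : Fin n → ℝ | ∃ i : ℕ, x = (A' ^ i) *ᵥ g},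
        p ⬝ᵥ x = 0 := by
      intro x hx
      induction hx using Submodule.span_induction with
      | mem y hy => obtain ⟨i, rfl⟩ := hy; exact (gen i).2
      | zero => simp
      | add a b _ _ ha hb => rw [dotProduct_add, ha, hb, add_zero]
      | smul c a _ ha => rw [dotProduct_smul, ha, smul_zero]
    exact hpp.ne' (horth p hmem)
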